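/- For every positive integer n, the sum over k from 2 to n-1 of binomial(2n, 2k-1) * (2^(2(n-k+1)) - 1) * (2^(2(k-1)) - 1) / (n-k+1) * B_{2(n-k+1)} equals (2^(2(n-1)) - 1) * (2 - n), where B_m denotes the m-th Bernoulli number. -/

import Mathlib

open Finset Polynomial in
lemma bern_comp_one_sub (n : ℕ) :
    (Polynomial.bernoulli n).comp (1 - Polynomial.X) =
      Polynomial.C ((-1 : ℚ) ^ n) * Polynomial.bernoulli n := by
  induction n with
  | zero => simp
  | succ n ih =>
    set p : ℚ[X] := (Polynomial.bernoulli (n+1)).comp (1 - X) -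
      C ((-1 : ℚ) ^ (n+1)) * Polynomial.bernoulli (n+1) with hp
    have hder : derivative p = 0 := by
      rw [hp, derivative_sub, derivative_comp, Polynomial.derivative_bernoulli_add_one,
        derivative_mul, derivative_C]
      rw [Polynomial.derivative_bernoulli_add_one]
      simp only [derivative_sub, derivative_one, derivative_X, zero_sub, mul_comp, natCast_comp,
        add_comp, one_comp, ih]
      simp only [pow_succ, map_mul, map_neg, map_one]
      ring
    have hc : p = C (p.coeff 0) := Polynomial.eq_C_of_derivative_eq_zero hder
    have he : p.eval 1 = 0 := by
      rw [hp]
      simp only [eval_sub, eval_comp, eval_sub, eval_one, eval_X, sub_self, eval_mul, eval_C,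
        Polynomial.bernoulli_eval_zero, Polynomial.bernoulli_eval_one]
      rw [bernoulli'_eq_bernoulli]
      ring_nf
      rw [mul_comm n 2, pow_mul]
      simp
    have hp0 : p = 0 := by
      rw [hc] at he ⊢
      simpa using he
    exact sub_eq_zero.mp (hp ▸ hp0)

open Polynomial in
lemma bern_eval_half_odd (n : ℕ) :
    (Polynomial.bernoulli (2 * n + 1)).eval (2⁻¹ : ℚ) = 0 := by
  have h := congrArg (Polynomial.eval (2⁻¹ : ℚ)) (bern_comp_one_sub (2 * n + 1))
  rw [eval_comp] at h
  simp only [eval_sub, eval_one, eval_X, eval_mul, eval_C] at h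
  norm_num at h
  rw [show (2⁻¹:ℚ) = 1/2 by norm_num]
  rw [Odd.neg_one_pow ⟨n, rfl⟩] at h
  linarith

open Polynomial in
lemma bern_eval_two_odd (n : ℕ) (hn : 1 ≤ n) :
    (Polynomial.bernoulli (2 * n + 1)).eval (2 : ℚ) = (2 * n + 1 : ℚ) := by
  have h := Polynomial.bernoulli_eval_one_add (2 * n + 1) 1
  norm_num at h
  rw [h, bernoulli'_eq_zero_of_odd ⟨n, by ring⟩ (by omega)]
  ring

open Finset in
lemma sum_choose_bernoulli_pow (N : ℕ) (q : ℚ) (hq : q ≠ 0) :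
    ∑ k ∈ range (N + 1), (N.choose k : ℚ) * bernoulli k * q ^ k
      = q ^ N * (Polynomial.bernoulli N).eval q⁻¹ := by
  rw [Polynomial.bernoulli, Polynomial.eval_finset_sum, mul_sum]
  apply sum_congr rfl
  intro i hi
  rw [mem_range] at hi
  have hi' : i ≤ N := Nat.lt_succ_iff.mp hi
  rw [Polynomial.eval_monomial]
  have h1 : q ^ N * (q⁻¹) ^ (N - i) = q ^ i := by
    rw [inv_pow]
    field_simp
    rw [← pow_add, Nat.sub_add_cancel hi']
  rw [← h1]
  ring

open Finset in
lemma sum_range_even_odd (f : ℕ → ℚ) (m : ℕ) :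
    ∑ k ∈ range (2 * m), f k = ∑ j ∈ range m, (f (2 * j) + f (2 * j + 1)) := by
  induction m with
  | zero => simp
  | succ m ih =>
    rw [show 2 * (m + 1) = 2 * m + 1 + 1 by ring, sum_range_succ, sum_range_succ, ih,
      sum_range_succ]
    ring

lemma bernoulli_odd_eq_zero' {j : ℕ} (hj : 1 ≤ j) : bernoulli (2 * j + 1) = 0 := by
  rw [bernoulli_eq_bernoulli'_of_ne_one (by omega)]
  exact bernoulli'_eq_zero_of_odd ⟨j, by ring⟩ (by omega)

open Finset in
lemma keyA (n : ℕ) (q : ℚ) (hq : q ≠ 0) :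
    ∑ j ∈ Icc 1 n, ((2 * n + 1).choose (2 * j) : ℚ) * bernoulli (2 * j) * q ^ (2 * j)
      = q ^ (2 * n + 1) * (Polynomial.bernoulli (2 * n + 1)).eval q⁻¹ - 1 + (2 * n + 1) * q / 2 := by
  have h := sum_choose_bernoulli_pow (2 * n + 1) q hq
  rw [show 2 * n + 1 + 1 = 2 * (n + 1) by ring, sum_range_even_odd] at h
  set f : ℕ → ℚ := fun k => ((2 * n + 1).choose k : ℚ) * bernoulli k * q ^ k with hf
  have hodd : ∑ j ∈ range (n + 1), f (2 * j + 1) = -(2 * n + 1) * q / 2 := by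
    rw [Finset.sum_eq_single_of_mem 0 (by simp)]
    · simp [hf, bernoulli_one]
      ring
    · intro b _ hb
      simp [hf, bernoulli_odd_eq_zero' (by omega : 1 ≤ b)]
  have heven : ∑ j ∈ range (n + 1), f (2 * j) = 1 + ∑ j ∈ Icc 1 n, f (2 * j) := by
    rw [Finset.sum_range_succ' (fun j => f (2 * j)) n]
    rw [← Finset.Ico_add_one_right_eq_Icc, Finset.sum_Ico_eq_sum_range]
    simp only [hf, Nat.add_sub_cancel, mul_zero, Nat.choose_zero_right, bernoulli_zero,
      pow_zero, Nat.cast_one]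
    rw [add_comm]
    norm_num
    apply Finset.sum_congr rfl
    intro i _
    rw [add_comm 1 i]
  rw [Finset.sum_add_distrib, hodd, heven] at h
  simp only [hf] at h ⊢
  linarith [h]

open Finset in
theorem bernoulli_sum_identity (n : ℕ) (hn : 0 < n) :
    ∑ k ∈ Finset.Icc 2 (n - 1),
      (Nat.choose (2 * n) (2 * k - 1) : ℚ) *
        ((2 ^ (2 * (n - k + 1)) - 1) * (2 ^ (2 * (k - 1)) - 1) / (n - k + 1 : ℕ)) *
          bernoulli (2 * (n - k + 1)) = (2 ^ (2 * (n - 1)) - 1) * (2 - (n : ℚ)) := by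
  rcases Nat.lt_or_ge n 2 with h2 | h2
  · interval_cases n
    simp
  -- n ≥ 2
  set g : ℕ → ℚ := fun j => ((2 * n).choose (2 * j - 1) : ℚ) *
      ((2 ^ (2 * j) - 1) * (2 ^ (2 * (n - j)) - 1) / ((j : ℕ) : ℚ)) * bernoulli (2 * j) with hg
  -- Step 1: reindex k ↦ n + 1 - k
  have hstep1 : ∑ k ∈ Finset.Icc 2 (n - 1),
      (Nat.choose (2 * n) (2 * k - 1) : ℚ) *
        ((2 ^ (2 * (n - k + 1)) - 1) * (2 ^ (2 * (k - 1)) - 1) / (n - k + 1 : ℕ)) *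
          bernoulli (2 * (n - k + 1)) = ∑ j ∈ Icc 2 (n - 1), g j := by
    apply Finset.sum_nbij' (i := fun k => n + 1 - k) (j := fun k => n + 1 - k)
    · intro a ha
      simp only [mem_Icc] at ha ⊢
      omega
    · intro a ha
      simp only [mem_Icc] at ha ⊢
      omega
    · intro a ha
      simp only [mem_Icc] at ha
      omega
    · intro a ha
      simp only [mem_Icc] at ha
      omega
    · intro k hk
      simp only [mem_Icc] at hk
      have h1 : n - k + 1 = n + 1 - k := by omega
      have h2 : n - (n + 1 - k) = k - 1 := by omega
      have h3 : (2 * n).choose (2 * k - 1) = (2 * n).choose (2 * (n + 1 - k) - 1) := by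
        rw [← Nat.choose_symm (by omega : 2 * k - 1 ≤ 2 * n)]
        congr 1
        omega
      simp only [hg, h1, h2, h3]
  rw [hstep1]
  -- Step 2: extend to Icc 1 n
  have hIcc1 : Finset.Icc 1 n = insert 1 (Finset.Icc 2 n) := by
    ext x; simp [Finset.mem_Icc, Finset.mem_insert]; omega
  have hIcc2 : Finset.Icc 2 n = insert n (Finset.Icc 2 (n - 1)) := by
    ext x; simp [Finset.mem_Icc, Finset.mem_insert]; omega
  have hgn : g n = 0 := by
    simp [hg]
  have hg1 : g 1 = (n : ℚ) * (2 ^ (2 * (n - 1)) - 1) := by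
    have hb2 : bernoulli 2 = 1/6 := by
      rw [bernoulli_eq_bernoulli'_of_ne_one (by norm_num), bernoulli'_two]
    simp only [hg]
    norm_num [hb2]
    ring
  have hsplit : ∑ j ∈ Icc 1 n, g j = g 1 + ∑ j ∈ Icc 2 (n - 1), g j := by
    rw [hIcc1, Finset.sum_insert (by simp), hIcc2,
      Finset.sum_insert (by simp [Finset.mem_Icc]; omega), hgn]
    ring
  -- Step 3: compute ∑ j ∈ Icc 1 n, g j = 2 * (2 ^ (2*(n-1)) - 1)
  have hmain : ∑ j ∈ Icc 1 n, g j = 2 * (2 ^ (2 * (n - 1)) - 1 : ℚ) := by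
    have hne : ((2 * n + 1 : ℕ) : ℚ) ≠ 0 := by positivity
    have hmul : (2 * n + 1 : ℚ) * ∑ j ∈ Icc 1 n, g j
        = 2 * ∑ j ∈ Icc 1 n, ((2 * n + 1).choose (2 * j) : ℚ) * bernoulli (2 * j) *
            ((2 ^ (2 * j) - 1) * (2 ^ (2 * (n - j)) - 1)) := by
      rw [Finset.mul_sum, Finset.mul_sum]
      apply Finset.sum_congr rfl
      intro j hj
      simp only [mem_Icc] at hj
      have hch : (2 * n + 1) * (2 * n).choose (2 * j - 1) = (2 * n + 1).choose (2 * j) * (2 * j) := by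
        have h := Nat.add_one_mul_choose_eq (2 * n) (2 * j - 1)
        have h2j : 2 * j - 1 + 1 = 2 * j := by omega
        simpa [Nat.succ_eq_add_one, h2j] using h
      have hjne : ((j : ℕ) : ℚ) ≠ 0 := by
        simp; omega
      rw [hg]
      have hchq : (2 * n + 1 : ℚ) * ((2 * n).choose (2 * j - 1) : ℚ)
          = ((2 * n + 1).choose (2 * j) : ℚ) * (2 * j) := by exact_mod_cast hch
      field_simp
      push_cast at hchq ⊢
      linear_combination (bernoulli (2 * j) * ((2 ^ (2 * j) - 1) * (2 ^ (2 * (n - j)) - 1))) * hchq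
    -- expand the product of the two factors into three q-sums
    have hexp : ∑ j ∈ Icc 1 n, ((2 * n + 1).choose (2 * j) : ℚ) * bernoulli (2 * j) *
            ((2 ^ (2 * j) - 1) * (2 ^ (2 * (n - j)) - 1))
        = (2 ^ (2 * n) + 1) * (∑ j ∈ Icc 1 n, ((2 * n + 1).choose (2 * j) : ℚ) * bernoulli (2 * j) * (1 : ℚ) ^ (2 * j))
          - (∑ j ∈ Icc 1 n, ((2 * n + 1).choose (2 * j) : ℚ) * bernoulli (2 * j) * (2 : ℚ) ^ (2 * j))
          - 2 ^ (2 * n) * (∑ j ∈ Icc 1 n, ((2 * n + 1).choose (2 * j) : ℚ) * bernoulli (2 * j) * (2⁻¹ : ℚ) ^ (2 * j)) := by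
      rw [Finset.mul_sum, Finset.mul_sum, ← Finset.sum_sub_distrib, ← Finset.sum_sub_distrib]
      apply Finset.sum_congr rfl
      intro j hj
      simp only [mem_Icc] at hj
      have hpow : (2 : ℚ) ^ (2 * (n - j)) * (2 : ℚ) ^ (2 * j) = 2 ^ (2 * n) := by
        rw [← pow_add]
        congr 1
        omega
      have h2j : ((2:ℚ)⁻¹) ^ (2 * j) = ((2:ℚ) ^ (2 * j))⁻¹ := by rw [inv_pow]
      have hne2 : (2 : ℚ) ^ (2 * j) ≠ 0 := by positivity
      rw [h2j]
      field_simp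
      linear_combination (((2 * n + 1).choose (2 * j) : ℚ) * bernoulli (2 * j) * ((2:ℚ) ^ (2 * j) - 1)) * hpow
    have hA := keyA n 1 one_ne_zero
    have hB := keyA n 2 two_ne_zero
    have hC := keyA n 2⁻¹ (by norm_num)
    rw [inv_inv] at hC
    rw [bern_eval_two_odd n (by omega)] at hC
    rw [show (1:ℚ)⁻¹ = 2⁻¹ * 2 * 1⁻¹ by norm_num] at hA
    rw [show (2⁻¹ * 2 * 1⁻¹ : ℚ) = 1 by norm_num] at hA
    rw [show ((1:ℚ)) = ((1:ℚ)) by rfl] at hA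
    rw [Polynomial.bernoulli_eval_one, bernoulli'_eq_zero_of_odd ⟨n, by ring⟩ (by omega)] at hA
    rw [bern_eval_half_odd n] at hB
    -- combine
    have hval : (2 * n + 1 : ℚ) * ∑ j ∈ Icc 1 n, g j
        = (2 * n + 1 : ℚ) * (2 * (2 ^ (2 * (n - 1)) - 1 : ℚ)) := by
      rw [hmul, hexp, hA, hB, hC]
      have hp1 : (2 : ℚ) ^ (2 * n) = 4 * 2 ^ (2 * (n - 1)) := by
        rw [show (4:ℚ) = 2^2 by norm_num, ← pow_add]
        congr 1
        omega
      have hp2 : ((2:ℚ)⁻¹) ^ (2 * n + 1) = ((2:ℚ) ^ (2 * n + 1))⁻¹ := by rw [inv_pow]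
      have hp3 : (2 : ℚ) ^ (2 * n + 1) = 8 * 2 ^ (2 * (n - 1)) := by
        rw [show (8:ℚ) = 2^3 by norm_num, ← pow_add]
        congr 1
        omega
      rw [hp2, hp1, hp3]
      have hX : (0:ℚ) < 2 ^ (2 * (n - 1)) := by positivity
      field_simp
      ring
    exact mul_left_cancel₀ (by positivity) hval
  have : ∑ j ∈ Icc 2 (n - 1), g j = 2 * (2 ^ (2 * (n - 1)) - 1 : ℚ) - g 1 := by
    rw [← hmain, hsplit]; ring
  rw [this, hg1]
  ring
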